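/- Let (S, A, T, γ) be a finite MDP with γ ∈ [0,1] and horizon T_h ≥ 1, let φ : S × A → ℝ^d be a feature map, and for θ ∈ ℝ^d consider the linear reward r_θ(s,a) = θᵀφ(s,a) with soft value iteration quantities Q_{θ,t}, V_{θ,t} and soft-VI policy π_{θ,t}(a|s) = exp(Q_{θ,t}(s,a) − V_{θ,t}(s)). Then for each 0 ≤ t ≤ T_h−1 and each s ∈ S, the map θ ↦ V_{θ,t}(s) is differentiable on ℝ^d and its gradient equals the discounted expected feature counts under the soft-VI policy: ∇_θ V_{θ,t}(s) = E_{π_θ}[ Σ_{t'=t}^{T_h−1} γ^{t'−t} φ(S_{t'}, A_{t'}) | S_t = s ]. -/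

import Mathlib

/-! STATEMENT 2: the gradient of the soft value function w.r.t. the reward parameters θ
equals the discounted expected feature counts under the soft-VI policy. -/

open scoped RealInnerProductSpace

/-- Soft value iteration, indexed by the number of remaining steps after the current one:
`softQ T γ r k = Q_{Th-1-k}` when the horizon is `Th`.  Thus `softQ T γ r 0 s a = r s a`
(the last step `t = Th-1`) and
`softQ T γ r (k+1) s a = r s a + γ ∑_{s'} T(s'|s,a) V(k, s')`. -/
noncomputable def softQ {S A : Type*} [Fintype S] [Fintype A]
    (T : S → A → S → ℝ) (γ : ℝ) (r : S → A → ℝ) : ℕ → S → A → ℝ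
  | 0 => fun s a => r s a
  | k + 1 => fun s a =>
      r s a + γ * ∑ s', T s a s' * Real.log (∑ a', Real.exp (softQ T γ r k s' a'))

/-- Soft state-value: `V(s) = log ∑_a exp Q(s,a)` (indexed by remaining steps). -/
noncomputable def softV {S A : Type*} [Fintype S] [Fintype A]
    (T : S → A → S → ℝ) (γ : ℝ) (r : S → A → ℝ) (k : ℕ) (s : S) : ℝ :=
  Real.log (∑ a, Real.exp (softQ T γ r k s a))

/-- `expSumV T π φ t k s` is the (vector-valued) expectation
`E_π[ ∑_{t'=t}^{t+k-1} φ t' S_{t'} A_{t'} | S_t = s ]` over trajectories generated from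
state `s` at time `t` by the time-dependent policy `π` and transitions `T`. -/
noncomputable def expSumV {S A : Type*} [Fintype S] [Fintype A] {d : ℕ}
    (T : S → A → S → ℝ) (π : ℕ → S → A → ℝ)
    (φ : ℕ → S → A → EuclideanSpace ℝ (Fin d)) : ℕ → ℕ → S → EuclideanSpace ℝ (Fin d)
  | _, 0, _ => 0
  | t, k + 1, s => ∑ a, π t s a • (φ t s a + ∑ s', T s a s' • expSumV T π φ (t + 1) k s')

section Aux

variable {S A : Type*} [Fintype S] [Fintype A] {d : ℕ}

/-- The soft-VI policy. -/
noncomputable def softPi (T : S → A → S → ℝ) (γ : ℝ) (r : S → A → ℝ)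
    (k : ℕ) (s : S) (a : A) : ℝ :=
  Real.exp (softQ T γ r k s a - softV T γ r k s)

/-- Candidate gradient of `softQ`. -/
noncomputable def gradQ (T : S → A → S → ℝ) (γ : ℝ) (r : S → A → ℝ)
    (φ : S → A → EuclideanSpace ℝ (Fin d)) : ℕ → S → A → EuclideanSpace ℝ (Fin d)
  | 0 => fun s a => φ s a
  | k + 1 => fun s a => φ s a + γ • ∑ s', T s a s' •
      ∑ a', softPi T γ r k s' a' • gradQ T γ r φ k s' a'

/-- Candidate gradient of `softV`. -/
noncomputable def gradV (T : S → A → S → ℝ) (γ : ℝ) (r : S → A → ℝ)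
    (φ : S → A → EuclideanSpace ℝ (Fin d)) (k : ℕ) (s : S) : EuclideanSpace ℝ (Fin d) :=
  ∑ a, softPi T γ r k s a • gradQ T γ r φ k s a

lemma hasGradientAt_inner_const (v θ : EuclideanSpace ℝ (Fin d)) :
    HasGradientAt (fun θ' : EuclideanSpace ℝ (Fin d) => ⟪θ', v⟫) v θ := by
  rw [hasGradientAt_iff_hasFDerivAt]
  have h : (fun θ' : EuclideanSpace ℝ (Fin d) => ⟪θ', v⟫)
      = fun θ' => (InnerProductSpace.toDual ℝ (EuclideanSpace ℝ (Fin d)) v) θ' := by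
    funext θ'
    rw [InnerProductSpace.toDual_apply_apply]; exact real_inner_comm _ _
  rw [h]
  exact (InnerProductSpace.toDual ℝ (EuclideanSpace ℝ (Fin d)) v).hasFDerivAt


variable [Nonempty A]

noncomputable def linR (φ : S → A → EuclideanSpace ℝ (Fin d))
    (θ' : EuclideanSpace ℝ (Fin d)) (s : S) (a : A) : ℝ := ⟪θ', φ s a⟫

open InnerProductSpace in
lemma master (T : S → A → S → ℝ) (γ : ℝ) (φ : S → A → EuclideanSpace ℝ (Fin d))
    (θ : EuclideanSpace ℝ (Fin d)) : ∀ k : ℕ,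
    (∀ s a, HasGradientAt (fun θ' => softQ T γ (linR φ θ') k s a)
      (gradQ T γ (linR φ θ) φ k s a) θ) ∧
    (∀ s, HasGradientAt (fun θ' => softV T γ (linR φ θ') k s)
      (gradV T γ (linR φ θ) φ k s) θ) := by
  -- the V-part follows from the Q-part at the same level
  have key : ∀ k : ℕ,
      (∀ s a, HasGradientAt (fun θ' => softQ T γ (linR φ θ') k s a)
        (gradQ T γ (linR φ θ) φ k s a) θ) →
      (∀ s, HasGradientAt (fun θ' => softV T γ (linR φ θ') k s)
        (gradV T γ (linR φ θ) φ k s) θ) := by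
    intro k hQ s
    have hpos : (0:ℝ) < ∑ a, Real.exp (softQ T γ (linR φ θ) k s a) :=
      Finset.sum_pos (fun a _ => Real.exp_pos _) Finset.univ_nonempty
    have hsum : HasFDerivAt (fun θ' => ∑ a, Real.exp (softQ T γ (linR φ θ') k s a))
        (∑ a, Real.exp (softQ T γ (linR φ θ) k s a) •
          toDual ℝ (EuclideanSpace ℝ (Fin d)) (gradQ T γ (linR φ θ) φ k s a)) θ :=
      HasFDerivAt.fun_sum fun a _ => ((hQ s a).hasFDerivAt).exp
    have hlog := hsum.log (ne_of_gt hpos)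
    rw [hasGradientAt_iff_hasFDerivAt]
    have hexp : ∀ a, softPi T γ (linR φ θ) k s a
        = (∑ a', Real.exp (softQ T γ (linR φ θ) k s a'))⁻¹
          * Real.exp (softQ T γ (linR φ θ) k s a) := by
      intro a
      rw [softPi, Real.exp_sub, softV, Real.exp_log hpos, div_eq_mul_inv, mul_comm]
    have heq : toDual ℝ (EuclideanSpace ℝ (Fin d)) (gradV T γ (linR φ θ) φ k s)
        = (∑ a, Real.exp (softQ T γ (linR φ θ) k s a))⁻¹ •
          ∑ a, Real.exp (softQ T γ (linR φ θ) k s a) •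
            toDual ℝ (EuclideanSpace ℝ (Fin d)) (gradQ T γ (linR φ θ) φ k s a) := by
      rw [gradV, map_sum, Finset.smul_sum]
      refine Finset.sum_congr rfl fun a _ => ?_
      rw [map_smul, hexp a, smul_smul]
    rw [show (fun θ' => softV T γ (linR φ θ') k s)
        = fun θ' => Real.log (∑ a, Real.exp (softQ T γ (linR φ θ') k s a)) from rfl, heq]
    exact hlog
  intro k
  induction k with
  | zero =>
    have hQ : ∀ s a, HasGradientAt (fun θ' => softQ T γ (linR φ θ') 0 s a)
        (gradQ T γ (linR φ θ) φ 0 s a) θ := by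
      intro s a
      simpa only [softQ, gradQ, linR] using hasGradientAt_inner_const (φ s a) θ
    exact ⟨hQ, key 0 hQ⟩
  | succ k ih =>
    have hQ : ∀ s a, HasGradientAt (fun θ' => softQ T γ (linR φ θ') (k+1) s a)
        (gradQ T γ (linR φ θ) φ (k+1) s a) θ := by
      intro s a
      have h1 : HasFDerivAt (fun θ' => linR φ θ' s a)
          (toDual ℝ (EuclideanSpace ℝ (Fin d)) (φ s a)) θ :=
        (hasGradientAt_inner_const (φ s a) θ).hasFDerivAt
      have h2 : ∀ s', HasFDerivAt (fun θ' => softV T γ (linR φ θ') k s')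
          (toDual ℝ (EuclideanSpace ℝ (Fin d)) (gradV T γ (linR φ θ) φ k s')) θ :=
        fun s' => (ih.2 s').hasFDerivAt
      have h3 : HasFDerivAt
          (fun θ' => γ * ∑ s', T s a s' * softV T γ (linR φ θ') k s')
          (γ • ∑ s', T s a s' •
            toDual ℝ (EuclideanSpace ℝ (Fin d)) (gradV T γ (linR φ θ) φ k s')) θ :=
        (HasFDerivAt.fun_sum fun s' _ => (h2 s').const_mul (T s a s')).const_mul γ
      have h4 := h1.add h3
      rw [hasGradientAt_iff_hasFDerivAt]
      have heq : toDual ℝ (EuclideanSpace ℝ (Fin d)) (gradQ T γ (linR φ θ) φ (k+1) s a)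
          = toDual ℝ (EuclideanSpace ℝ (Fin d)) (φ s a) + γ • ∑ s', T s a s' •
            toDual ℝ (EuclideanSpace ℝ (Fin d)) (gradV T γ (linR φ θ) φ k s') := by
        rw [show gradQ T γ (linR φ θ) φ (k+1) s a = φ s a + γ • ∑ s', T s a s' •
            gradV T γ (linR φ θ) φ k s' from rfl]
        rw [map_add, map_smul, map_sum]
        simp only [map_smul]
      rw [heq]
      exact h4
    exact ⟨hQ, key (k+1) hQ⟩

end Aux
section Comb

variable {S A : Type*} [Fintype S] [Fintype A] {d : ℕ}

lemma expSumV_smul (T : S → A → S → ℝ) (π : ℕ → S → A → ℝ) (c : ℝ)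
    (ψ₁ ψ₂ : ℕ → S → A → EuclideanSpace ℝ (Fin d)) :
    ∀ (m tb : ℕ), (∀ t' s' a, tb ≤ t' → t' < tb + m → ψ₁ t' s' a = c • ψ₂ t' s' a) →
      ∀ s, expSumV T π ψ₁ tb m s = c • expSumV T π ψ₂ tb m s
  | 0, tb, _, s => by simp [expSumV]
  | m+1, tb, h, s => by
    rw [expSumV, expSumV, Finset.smul_sum]
    refine Finset.sum_congr rfl fun a _ => ?_
    rw [h tb s a le_rfl (by omega)]
    have hE : ∀ s', expSumV T π ψ₁ (tb+1) m s' = c • expSumV T π ψ₂ (tb+1) m s' :=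
      fun s' => expSumV_smul T π c ψ₁ ψ₂ m (tb+1)
        (fun t' s'' a' h1 h2 => h t' s'' a' (by omega) (by omega)) s'
    simp only [hE]
    rw [smul_comm c (π tb s a)]
    congr 1
    rw [smul_add]
    congr 1
    rw [Finset.smul_sum]
    exact Finset.sum_congr rfl fun s' _ => smul_comm _ _ _

lemma expSumV_eq_gradV (T : S → A → S → ℝ) (γ : ℝ) (r : S → A → ℝ)
    (φ : S → A → EuclideanSpace ℝ (Fin d)) (Th : ℕ) :
    ∀ (k t : ℕ), t + k + 1 = Th → ∀ s,
      expSumV T (fun t' => softPi T γ r (Th - 1 - t'))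
        (fun t' s' a => γ ^ (t' - t) • φ s' a) t (k+1) s = gradV T γ r φ k s
  | 0, t, hTh, s => by
    have h0 : Th - 1 - t = 0 := by omega
    simp [expSumV, gradV, gradQ, h0]
  | k+1, t, hTh, s => by
    have hk : Th - 1 - t = k + 1 := by omega
    rw [expSumV, gradV]
    refine Finset.sum_congr rfl fun a _ => ?_
    have hshift : ∀ s', expSumV T (fun t' => softPi T γ r (Th - 1 - t'))
        (fun t' s' a => γ ^ (t' - t) • φ s' a) (t+1) (k+1) s'
        = γ • expSumV T (fun t' => softPi T γ r (Th - 1 - t'))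
          (fun t' s' a => γ ^ (t' - (t+1)) • φ s' a) (t+1) (k+1) s' := by
      intro s'
      refine expSumV_smul T _ γ _ _ (k+1) (t+1) (fun t' s'' a' h1 _ => ?_) s'
      have ht' : t' - t = (t' - (t+1)) + 1 := by omega
      rw [ht', pow_succ', mul_smul]
    have hIH : ∀ s', expSumV T (fun t' => softPi T γ r (Th - 1 - t'))
        (fun t' s' a => γ ^ (t' - (t+1)) • φ s' a) (t+1) (k+1) s' = gradV T γ r φ k s' :=
      fun s' => expSumV_eq_gradV T γ r φ Th k (t+1) (by omega) s'
    simp only [hshift, hIH, hk, Nat.sub_self, pow_zero, one_smul]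
    rw [show gradQ T γ r φ (k+1) s a = φ s a + γ • ∑ s', T s a s' • gradV T γ r φ k s'
      from rfl]
    congr 1
    congr 1
    rw [Finset.smul_sum]
    exact Finset.sum_congr rfl fun s' _ => smul_comm _ _ _

end Comb

theorem stmt2 {S A : Type*} [Fintype S] [Fintype A] [Nonempty S] [Nonempty A] {d : ℕ}
    (T : S → A → S → ℝ)
    (hT0 : ∀ s a s', 0 ≤ T s a s') (hT1 : ∀ s a, ∑ s', T s a s' = 1)
    (γ : ℝ) (hγ : γ ∈ Set.Icc (0 : ℝ) 1)
    (Th : ℕ) (hTh : 1 ≤ Th)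
    (φ : S → A → EuclideanSpace ℝ (Fin d))
    (t : ℕ) (ht : t ≤ Th - 1) (s : S) (θ : EuclideanSpace ℝ (Fin d)) :
    -- `θ' ↦ V_{θ',t}(s)` is differentiable at `θ` with gradient equal to the discounted
    -- expected feature counts from time `t` to `Th-1` under the soft-VI policy `π_θ`.
    HasGradientAt
      (fun θ' : EuclideanSpace ℝ (Fin d) =>
        softV T γ (fun s a => ⟪θ', φ s a⟫) (Th - 1 - t) s)
      (expSumV T
        (fun t' s' a => Real.exp (softQ T γ (fun s a => ⟪θ, φ s a⟫) (Th - 1 - t') s' a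
            - softV T γ (fun s a => ⟪θ, φ s a⟫) (Th - 1 - t') s'))
        (fun t' s' a => γ ^ (t' - t) • φ s' a) t (Th - t) s)
      θ := by
  have hk : Th - t = (Th - 1 - t) + 1 := by omega
  rw [hk]
  rw [show (fun t' s' a => Real.exp (softQ T γ (fun s a => ⟪θ, φ s a⟫) (Th - 1 - t') s' a
      - softV T γ (fun s a => ⟪θ, φ s a⟫) (Th - 1 - t') s'))
      = fun t' => softPi T γ (fun s a => ⟪θ, φ s a⟫) (Th - 1 - t') from rfl]
  rw [expSumV_eq_gradV T γ (fun s a => ⟪θ, φ s a⟫) φ Th (Th - 1 - t) t (by omega) s]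
  exact (master T γ φ θ (Th - 1 - t)).2 s
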